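/- Assume 0 < α ≤ 1/2 and 1 ≤ β < ∞. Then there is no pair (x,y) ∈ ℤ² satisfying both 0 ≤ −αx + y < α and 1 < −βx + y ≤ β. -/
import Mathlib


set_option maxHeartbeats 1000000
set_option synthInstance.maxHeartbeats 400000

noncomputable section
open scoped ENNReal Classical

/-- If `0 < α ≤ 1/2` and `1 ≤ β < ∞` then no integer point `(x,y)` satisfies
both `0 ≤ -αx+y < α` and `1 < -βx+y ≤ β`. -/
theorem no_lattice_point (α β : ℝ) (hα : 0 < α) (hα' : α ≤ 1/2) (hβ : 1 ≤ β) :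
    ¬ ∃ x y : ℤ, (0 ≤ -α * (x : ℝ) + (y : ℝ) ∧ -α * (x : ℝ) + (y : ℝ) < α) ∧
      (1 < -β * (x : ℝ) + (y : ℝ) ∧ -β * (x : ℝ) + (y : ℝ) ≤ β) := by
  rintro ⟨x, y, ⟨h1, h2⟩, ⟨h3, h4⟩⟩
  rcases le_or_gt 0 x with hx | hx
  · -- x ≥ 0 : y > βx+1 ≥ x+1, but y < α(x+1) ≤ (x+1)/2 ≤ x+1
    have hX : (0:ℝ) ≤ (x:ℝ) := by exact_mod_cast hx
    nlinarith [mul_nonneg (sub_nonneg.2 hβ) hX,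
      mul_nonneg (le_of_lt hα) hX]
  · -- x ≤ -1
    have hx1 : x ≤ -1 := by omega
    have hX : (x:ℝ) ≤ -1 := by exact_mod_cast hx1
    -- y > x, so y ≥ x + 1
    have hyx : x < y := by
      have : (x:ℝ) < (y:ℝ) := by nlinarith
      exact_mod_cast this
    have hyx1 : x + 1 ≤ y := by omega
    have hY : ((x:ℝ) + 1) ≤ (y:ℝ) := by exact_mod_cast hyx1
    -- y ≤ β(x+1) ≤ x+1, so y = x+1
    have hY2 : (y:ℝ) ≤ (x:ℝ) + 1 := by nlinarith
    have hEq : (y:ℝ) = (x:ℝ) + 1 := le_antisymm hY2 hY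
    rw [hEq] at h2 h3 h4
    nlinarith [mul_pos (sub_pos.2 (lt_of_le_of_lt hα' (by norm_num : (1:ℝ)/2 < 1)))
      (show (0:ℝ) < -((x:ℝ)+1) by nlinarith)]

end
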